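/- Fix a > 0 and define F_a : (-∞,-1) → ℝ by F_a(z) = (φ(z) - z)·((z + φ(z))/2 + 1 + a). Then F_a attains its global maximum over (-∞,-1), and the maximum is attained exactly at the unique point z_a ∈ (-∞,-1) satisfying (z_a + 1)(φ(z_a) + 1) + a = 0. (The maximal value F_a(z_a) is the upper tail large deviation rate function r^flat(a) for the system of reflected Brownian motions with periodic initial condition.) -/

import Mathlib

open Real Set

/-- auxiliary function: `hh s = -(z+1)(w+1)` under the parametrization. -/
noncomputable def hh (s : ℝ) : ℝ := s ^ 2 - (s * Real.cosh s / Real.sinh s - 1) ^ 2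

/-- auxiliary function: value of the functional under the parametrization. -/
noncomputable def GG (a s : ℝ) : ℝ := 2 * s * (1 + a) - 2 * s ^ 2 * Real.cosh s / Real.sinh s

lemma hh_hasDerivAt {s : ℝ} (hs : 0 < s) :
    HasDerivAt hh (2 * (Real.cosh s * (s ^ 2 + Real.sinh s ^ 2) - 2 * s * Real.sinh s)
      / Real.sinh s ^ 3) s := by
  have hS : Real.sinh s ≠ 0 := ne_of_gt (Real.sinh_pos_iff.2 hs)
  have h1 : HasDerivAt (fun x => x * Real.cosh x / Real.sinh x)
      (((1 * Real.cosh s + s * Real.sinh s) * Real.sinh s - s * Real.cosh s * Real.cosh s)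
        / Real.sinh s ^ 2) s :=
    ((hasDerivAt_id s).mul (Real.hasDerivAt_cosh s)).div (Real.hasDerivAt_sinh s) hS
  have h2 : HasDerivAt (fun x => x ^ 2 - (x * Real.cosh x / Real.sinh x - 1) ^ 2)
      (2 * s ^ (2 - 1) - 2 * (s * Real.cosh s / Real.sinh s - 1) ^ (2 - 1) *
        (((1 * Real.cosh s + s * Real.sinh s) * Real.sinh s - s * Real.cosh s * Real.cosh s)
          / Real.sinh s ^ 2)) s := by
    have : HasDerivAt (fun x => x ^ 2 - (x * Real.cosh x / Real.sinh x - 1) ^ 2) _ s :=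
      (hasDerivAt_pow 2 s).sub ((h1.sub_const 1).pow 2)
    convert this using 1; norm_num
  have heq : (2 : ℝ) * s ^ (2 - 1) - 2 * (s * Real.cosh s / Real.sinh s - 1) ^ (2 - 1) *
      (((1 * Real.cosh s + s * Real.sinh s) * Real.sinh s - s * Real.cosh s * Real.cosh s)
        / Real.sinh s ^ 2) =
      2 * (Real.cosh s * (s ^ 2 + Real.sinh s ^ 2) - 2 * s * Real.sinh s) / Real.sinh s ^ 3 := by
    have hc : Real.cosh s ^ 2 = Real.sinh s ^ 2 + 1 := Real.cosh_sq s
    norm_num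
    field_simp
    linear_combination (s ^ 2 * Real.cosh s - 2 * s * Real.sinh s) * hc
  exact heq ▸ h2

lemma GG_hasDerivAt {s : ℝ} (a : ℝ) (hs : 0 < s) :
    HasDerivAt (GG a) (2 * (a - hh s)) s := by
  have hS : Real.sinh s ≠ 0 := ne_of_gt (Real.sinh_pos_iff.2 hs)
  have h1 : HasDerivAt (fun x => 2 * x ^ 2 * Real.cosh x / Real.sinh x)
      (((2 * (2 * s ^ (2 - 1)) * Real.cosh s + 2 * s ^ 2 * Real.sinh s) * Real.sinh s
        - 2 * s ^ 2 * Real.cosh s * Real.cosh s) / Real.sinh s ^ 2) s :=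
    ((((hasDerivAt_pow 2 s).const_mul 2).mul (Real.hasDerivAt_cosh s)).div
      (Real.hasDerivAt_sinh s) hS)
  have h2 : HasDerivAt (fun x : ℝ => 2 * x * (1 + a)) (2 * (1 + a)) s := by
    simpa using ((hasDerivAt_id s).const_mul (2 : ℝ)).mul_const (1 + a)
  have h3 := h2.sub h1
  have heq : 2 * (1 + a) - ((2 * (2 * s ^ (2 - 1)) * Real.cosh s + 2 * s ^ 2 * Real.sinh s)
      * Real.sinh s - 2 * s ^ 2 * Real.cosh s * Real.cosh s) / Real.sinh s ^ 2
      = 2 * (a - hh s) := by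
    unfold hh
    field_simp
    ring
  have : HasDerivAt (fun x => 2 * x * (1 + a) - 2 * x ^ 2 * Real.cosh x / Real.sinh x)
      (2 * (a - hh s)) s := heq ▸ h3
  exact this

lemma hh_strictMono : StrictMonoOn hh (Ioi (0 : ℝ)) := by
  apply strictMonoOn_of_deriv_pos (convex_Ioi 0)
  · exact fun x hx => ((hh_hasDerivAt hx).continuousAt).continuousWithinAt
  · intro x hx
    rw [interior_Ioi] at hx
    rw [(hh_hasDerivAt hx).deriv]
    have hS : 0 < Real.sinh x := Real.sinh_pos_iff.2 hx
    have hC : 1 < Real.cosh x := Real.one_lt_cosh.2 (ne_of_gt hx)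
    have hnum : 0 < Real.cosh x * (x ^ 2 + Real.sinh x ^ 2) - 2 * x * Real.sinh x := by
      nlinarith [mul_pos (sub_pos.mpr hC) (show (0:ℝ) < x ^ 2 + Real.sinh x ^ 2 by positivity),
        sq_nonneg (x - Real.sinh x)]
    positivity

/-- Parametrization of the curve `w e^w = z e^z`. -/
lemma param {z w : ℝ} (hz : z < -1) (hw1 : -1 < w) (hw0 : w < 0)
    (hwz : w * Real.exp w = z * Real.exp z) :
    0 < (w - z) / 2 ∧
      w = -((w - z) / 2) * (Real.cosh ((w - z) / 2) / Real.sinh ((w - z) / 2)) + (w - z) / 2 ∧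
      z = -((w - z) / 2) * (Real.cosh ((w - z) / 2) / Real.sinh ((w - z) / 2)) - (w - z) / 2 := by
  set s := (w - z) / 2 with hs_def
  have hs : 0 < s := by
    have : z < w := lt_trans hz hw1
    simp only [hs_def]; linarith
  have hS : 0 < Real.sinh s := Real.sinh_pos_iff.2 hs
  have hS' : Real.sinh s ≠ 0 := ne_of_gt hS
  have h2s : w - z = 2 * s := by simp only [hs_def]; ring
  have hmul : Real.exp s * Real.exp (-s) = 1 := by rw [← Real.exp_add]; simp
  -- z = w * exp (2 s)
  have hz_eq : z = w * Real.exp (2 * s) := by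
    rw [show (2:ℝ) * s = w - z by linarith, Real.exp_sub]
    have hez : Real.exp z ≠ 0 := Real.exp_ne_zero z
    field_simp
    linarith [hwz]
  -- w * (1 - exp (2 s)) = 2 s
  have hw_eq : w * (1 - Real.exp (2 * s)) = 2 * s := by
    have h := hz_eq
    linarith [h]
  have hfact : (1 : ℝ) - Real.exp (2 * s) = -2 * Real.exp s * Real.sinh s := by
    rw [Real.sinh_eq, show (2:ℝ) * s = s + s by ring, Real.exp_add]
    linear_combination -hmul
  have hwSe : w * Real.sinh s * Real.exp s = -s := by
    rw [hfact] at hw_eq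
    linear_combination (-1/2 : ℝ) * hw_eq
  have hwS : w * Real.sinh s = -s * Real.exp (-s) := by
    linear_combination Real.exp (-s) * hwSe - (w * Real.sinh s) * hmul
  have hSC : Real.sinh s - Real.cosh s = -Real.exp (-s) := by
    rw [Real.sinh_eq, Real.cosh_eq]; ring
  have hkey : w = -s * (Real.cosh s / Real.sinh s) + s := by
    rw [eq_comm, ← sub_eq_zero]
    field_simp
    linear_combination -hwS + s * hSC
  refine ⟨hs, hkey, ?_⟩
  have hzw : z = w - 2 * s := by linarith
  rw [hzw, hkey]; ring

theorem stmt_11 (φ : ℝ → ℝ)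
    (hφ : ∀ z : ℝ, z < -1 → φ z ∈ Set.Ioo (-1 : ℝ) 0 ∧ φ z * Real.exp (φ z) = z * Real.exp z)
    (a : ℝ) (ha : 0 < a)
    (za : ℝ) (hza : za < -1) (hza' : (za + 1) * (φ za + 1) + a = 0) :
    ∀ z : ℝ, z < -1 → z ≠ za →
      (φ z - z) * ((z + φ z) / 2 + 1 + a) < (φ za - za) * ((za + φ za) / 2 + 1 + a) := by
  intro z hz hne
  obtain ⟨⟨hw1, hw0⟩, hwz⟩ := hφ z hz
  obtain ⟨⟨hwa1, hwa0⟩, hwaz⟩ := hφ za hza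
  obtain ⟨hs, hw_eq, hz_eq⟩ := param hz hw1 hw0 hwz
  obtain ⟨hsa, hwa_eq, hza_eq⟩ := param hza hwa1 hwa0 hwaz
  set s := (φ z - z) / 2 with hs_def
  set sa := (φ za - za) / 2 with hsa_def
  have hS : Real.sinh s ≠ 0 := ne_of_gt (Real.sinh_pos_iff.2 hs)
  have hSa : Real.sinh sa ≠ 0 := ne_of_gt (Real.sinh_pos_iff.2 hsa)
  have h2s : φ z - z = 2 * s := by rw [hs_def]; ring
  have h2sa : φ za - za = 2 * sa := by rw [hsa_def]; ring
  -- values of the functional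
  have hF : (φ z - z) * ((z + φ z) / 2 + 1 + a) = GG a s := by
    rw [h2s]
    simp only [GG]
    linear_combination s * hz_eq + s * hw_eq
  have hFa : (φ za - za) * ((za + φ za) / 2 + 1 + a) = GG a sa := by
    rw [h2sa]
    simp only [GG]
    linear_combination sa * hza_eq + sa * hwa_eq
  -- constraint: a = hh sa
  have hconstr : a = hh sa := by
    have hprod : (za + 1) * (φ za + 1) = -hh sa := by
      simp only [hh]
      linear_combination (φ za + 1) * hza_eq +
        (-sa * (Real.cosh sa / Real.sinh sa) - sa + 1) * hwa_eq
    rw [hprod] at hza'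
    linarith
  -- s ≠ sa
  have hsne : s ≠ sa := by
    intro h
    apply hne
    rw [hz_eq, hza_eq, h]
  rw [hF, hFa]
  -- main comparison
  rcases lt_or_gt_of_ne hsne with hlt | hgt
  · -- s < sa : GG increasing on [s, sa]
    have hmono : StrictMonoOn (GG a) (Icc s sa) := by
      apply strictMonoOn_of_deriv_pos (convex_Icc s sa)
      · intro x hx
        have hx0 : 0 < x := lt_of_lt_of_le hs hx.1
        exact ((GG_hasDerivAt a hx0).continuousAt).continuousWithinAt
      · intro x hx
        rw [interior_Icc] at hx
        have hx0 : 0 < x := lt_trans hs hx.1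
        rw [(GG_hasDerivAt a hx0).deriv]
        have : hh x < hh sa := hh_strictMono (mem_Ioi.2 hx0) (mem_Ioi.2 hsa) hx.2
        rw [hconstr]
        linarith
    exact hmono (left_mem_Icc.2 (le_of_lt hlt)) (right_mem_Icc.2 (le_of_lt hlt)) hlt
  · -- sa < s : GG decreasing on [sa, s]
    have hmono : StrictAntiOn (GG a) (Icc sa s) := by
      apply strictAntiOn_of_deriv_neg (convex_Icc sa s)
      · intro x hx
        have hx0 : 0 < x := lt_of_lt_of_le hsa hx.1
        exact ((GG_hasDerivAt a hx0).continuousAt).continuousWithinAt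
      · intro x hx
        rw [interior_Icc] at hx
        have hx0 : 0 < x := lt_trans hsa hx.1
        rw [(GG_hasDerivAt a hx0).deriv]
        have : hh sa < hh x := hh_strictMono (mem_Ioi.2 hsa) (mem_Ioi.2 hx0) hx.1
        rw [hconstr]
        linarith
    exact hmono (left_mem_Icc.2 (le_of_lt hgt)) (right_mem_Icc.2 (le_of_lt hgt)) hgt
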